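/- Let d ≤ n and let P be a d×n integer matrix of rank d. Let a^H : ℤ^n → ℂ be the n-dimensional Haar low-pass filter, a^H(k) = 2^{-n} for k ∈ {0,1}^n and 0 otherwise, and let a_P := P a^H be the box spline refinement filter. Then the following are equivalent: (i) P^T ω ∉ 2ℤ^n for every ω ∈ {0,1}^d \ {0}; (ii) a_P has sum rules of order at least one, i.e., Σ_{k∈ℤ^d} a_P(γ + 2k) = 2^{-d} for every γ ∈ {0,1}^d. -/

import Mathlib

open scoped BigOperators

/-- The `n`-dimensional Haar low-pass filter: value `2^{-n}` on `{0,1}^n ⊆ ℤ^n`. -/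
noncomputable def haarFilter (n : ℕ) : (Fin n → ℤ) → ℂ :=
  fun k => if ∀ i, k i = 0 ∨ k i = 1 then ((2 : ℂ) ^ n)⁻¹ else 0

/-- The projected filter `(Pa)(j) := Σ_{k ∈ ℤ^n, Pk = j} a(k)`. -/
noncomputable def projFilter {d n : ℕ} (P : Matrix (Fin d) (Fin n) ℤ)
    (a : (Fin n → ℤ) → ℂ) : (Fin d → ℤ) → ℂ :=
  fun j => ∑ᶠ (k : Fin n → ℤ) (_ : P.mulVec k = j), a k

open Matrix


-- general cast lemma
lemma cast_mulVec {p q : ℕ} (A : Matrix (Fin p) (Fin q) ℤ) (k : Fin q → ℤ) (j : Fin p) :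
    ((A.mulVec k j : ℤ) : ZMod 2) =
      (A.map (Int.cast : ℤ → ZMod 2)).mulVec (fun i => ((k i : ZMod 2))) j := by
  simp only [Matrix.mulVec, dotProduct, Matrix.map_apply]
  push_cast
  rfl

-- embedding of F2 vectors into integer vectors
noncomputable def emb {n : ℕ} (b : Fin n → ZMod 2) : Fin n → ℤ := fun i => ((b i).val : ℤ)

lemma emb_cast {n : ℕ} (b : Fin n → ZMod 2) (i : Fin n) : ((emb b i : ℤ) : ZMod 2) = b i := by
  simp [emb, ZMod.natCast_val, ZMod.cast_id]

lemma emb_inj {n : ℕ} : Function.Injective (emb (n := n)) := by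
  intro b₁ b₂ h
  funext i
  have := congrFun h i
  simp only [emb, Int.natCast_inj] at this
  exact ZMod.val_injective 2 this

lemma emb_mem {n : ℕ} (b : Fin n → ZMod 2) (i : Fin n) : emb b i = 0 ∨ emb b i = 1 := by
  have : (b i).val < 2 := ZMod.val_lt (b i)
  simp only [emb]
  omega

lemma emb_surj {n : ℕ} (k : Fin n → ℤ) (hk : ∀ i, k i = 0 ∨ k i = 1) :
    ∃ b : Fin n → ZMod 2, emb b = k := by
  refine ⟨fun i => ((k i : ZMod 2)), funext fun i => ?_⟩
  rcases hk i with h | h <;> simp [emb, h, ZMod.val_one]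

lemma haar_emb {n : ℕ} (b : Fin n → ZMod 2) : haarFilter n (emb b) = ((2 : ℂ) ^ n)⁻¹ := by
  simp [haarFilter, emb_mem b]

lemma projFilter_eq {d n : ℕ} (P : Matrix (Fin d) (Fin n) ℤ) (j : Fin d → ℤ) :
    projFilter P (haarFilter n) j =
      ∑ b : Fin n → ZMod 2, if P.mulVec (emb b) = j then ((2 : ℂ) ^ n)⁻¹ else 0 := by
  classical
  unfold projFilter
  have h1 : ∀ k : Fin n → ℤ, (∑ᶠ (_ : P.mulVec k = j), haarFilter n k) =
      if P.mulVec k = j then haarFilter n k else 0 := fun k => finsum_eq_if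
  rw [finsum_congr h1]
  rw [finsum_eq_sum_of_support_subset _
    (s := (Finset.univ.image (emb (n := n)) : Finset (Fin n → ℤ))) ?_]
  · rw [Finset.sum_image (fun b _ b' _ h => emb_inj h)]
    refine Finset.sum_congr rfl fun b _ => ?_
    rw [haar_emb]
  · intro k hk
    simp only [Function.mem_support, ne_eq, ite_eq_right_iff, not_forall] at hk
    obtain ⟨-, hne⟩ := hk
    have : ∀ i, k i = 0 ∨ k i = 1 := by
      by_contra h
      exact hne (by simp [haarFilter, h])
    obtain ⟨b, rfl⟩ := emb_surj k this
    simp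

lemma Tsum {d n : ℕ} (P : Matrix (Fin d) (Fin n) ℤ) (γ : Fin d → ℤ) :
    (∑ᶠ m : Fin d → ℤ, projFilter P (haarFilter n) (fun i => γ i + 2 * m i)) =
      ((Finset.univ.filter (fun b : Fin n → ZMod 2 =>
        (P.map (Int.cast : ℤ → ZMod 2)).mulVec b = fun i => ((γ i : ZMod 2)))).card : ℂ) *
        ((2 : ℂ) ^ n)⁻¹ := by
  classical
  have key : ∀ m : Fin d → ℤ, projFilter P (haarFilter n) (fun i => γ i + 2 * m i) =
      ∑ b : Fin n → ZMod 2,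
        if P.mulVec (emb b) = fun i => γ i + 2 * m i then ((2 : ℂ) ^ n)⁻¹ else 0 :=
    fun m => projFilter_eq P _
  rw [finsum_congr key]
  set M : Finset (Fin d → ℤ) :=
    Finset.univ.image (fun b : Fin n → ZMod 2 => fun i => (P.mulVec (emb b) i - γ i) / 2) with hM
  rw [finsum_eq_sum_of_support_subset _ (s := M) ?_]
  · rw [Finset.sum_comm]
    have inner : ∀ b : Fin n → ZMod 2,
        (∑ m ∈ M, if P.mulVec (emb b) = fun i => γ i + 2 * m i then ((2 : ℂ) ^ n)⁻¹ else 0) =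
        if (P.map (Int.cast : ℤ → ZMod 2)).mulVec b = (fun i => ((γ i : ZMod 2))) then
          ((2 : ℂ) ^ n)⁻¹ else 0 := by
      intro b
      have hcast : ((P.map (Int.cast : ℤ → ZMod 2)).mulVec b = (fun i => ((γ i : ZMod 2)))) ↔
          (∀ i, (2 : ℤ) ∣ (P.mulVec (emb b) i - γ i)) := by
        constructor
        · intro h i
          have h2 : (((P.mulVec (emb b) i - γ i : ℤ)) : ZMod 2) = 0 := by
            push_cast
            rw [cast_mulVec]
            rw [show (fun i => ((emb b i : ℤ) : ZMod 2)) = b from funext (emb_cast b)]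
            rw [congrFun h i]
            ring
          exact_mod_cast (ZMod.intCast_zmod_eq_zero_iff_dvd _ 2).mp h2
        · intro h
          funext i
          have := (ZMod.intCast_zmod_eq_zero_iff_dvd _ 2).mpr (h i)
          push_cast at this
          rw [cast_mulVec] at this
          rw [show (fun i => ((emb b i : ℤ) : ZMod 2)) = b from funext (emb_cast b)] at this
          linear_combination this
      by_cases hdvd : ∀ i, (2 : ℤ) ∣ (P.mulVec (emb b) i - γ i)
      · set m0 : Fin d → ℤ := fun i => (P.mulVec (emb b) i - γ i) / 2 with hm0
        have hcond : ∀ m : Fin d → ℤ,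
            (P.mulVec (emb b) = fun i => γ i + 2 * m i) ↔ m = m0 := by
          intro m
          constructor
          · intro h
            funext i
            have := congrFun h i
            simp only [hm0]
            omega
          · rintro rfl
            funext i
            have := Int.ediv_mul_cancel (hdvd i)
            simp only [hm0]
            omega
        calc (∑ m ∈ M, if P.mulVec (emb b) = fun i => γ i + 2 * m i then ((2:ℂ)^n)⁻¹ else 0)
            = ∑ m ∈ M, if m = m0 then ((2:ℂ)^n)⁻¹ else 0 :=
              Finset.sum_congr rfl fun m _ => by rw [if_congr (hcond m) rfl rfl]
          _ = if m0 ∈ M then ((2:ℂ)^n)⁻¹ else 0 := Finset.sum_ite_eq' M m0 _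
          _ = ((2:ℂ)^n)⁻¹ := by
              rw [if_pos]
              exact Finset.mem_image.mpr ⟨b, Finset.mem_univ b, rfl⟩
          _ = _ := by rw [if_pos (hcast.mpr hdvd)]
      · rw [if_neg (fun h => hdvd (hcast.mp h))]
        refine Finset.sum_eq_zero fun m _ => ?_
        rw [if_neg]
        intro h
        exact hdvd fun i => ⟨m i, by have := congrFun h i; omega⟩
    rw [Finset.sum_congr rfl fun b _ => inner b]
    rw [← Finset.sum_filter, Finset.sum_const, nsmul_eq_mul]
  · intro m hm
    simp only [Function.mem_support, ne_eq] at hm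
    have : ∃ b : Fin n → ZMod 2, P.mulVec (emb b) = fun i => γ i + 2 * m i := by
      by_contra h
      push_neg at h
      exact hm (Finset.sum_eq_zero fun b _ => if_neg (h b))
    obtain ⟨b, hb⟩ := this
    refine Finset.mem_coe.mpr (Finset.mem_image.mpr ⟨b, Finset.mem_univ b, ?_⟩)
    funext i
    have := congrFun hb i
    omega

lemma surj_of_dual_inj {d n : ℕ} (Q : Matrix (Fin d) (Fin n) (ZMod 2))
    (h : ∀ w : Fin d → ZMod 2, Qᵀ.mulVec w = 0 → w = 0) :
    Function.Surjective Q.mulVecLin := by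
  classical
  have hker : LinearMap.ker Qᵀ.mulVecLin = ⊥ := by
    rw [Submodule.eq_bot_iff]
    intro w hw
    refine h w ?_
    rw [Matrix.mulVec_transpose]
    simpa using hw
  have h1 : Module.finrank (ZMod 2) (LinearMap.range Qᵀ.mulVecLin) = d := by
    have := LinearMap.finrank_range_add_finrank_ker (Qᵀ.mulVecLin)
    rw [hker, finrank_bot] at this
    simpa using this
  have h2 : Q.rank = d := by
    rw [← Matrix.rank_transpose]
    exact h1
  have h3 : LinearMap.range Q.mulVecLin = ⊤ := by
    apply Submodule.eq_top_of_finrank_eq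
    have h2' : Module.finrank (ZMod 2) (LinearMap.range Q.mulVecLin) = d := h2
    simp [h2', Module.finrank_pi]
  exact LinearMap.range_eq_top.mp h3

lemma fiber_card {d n : ℕ} (Q : Matrix (Fin d) (Fin n) (ZMod 2))
    (hs : Function.Surjective Q.mulVecLin) (c : Fin d → ZMod 2) :
    (Finset.univ.filter (fun b : Fin n → ZMod 2 => Q.mulVec b = c)).card = 2 ^ (n - d) := by
  classical
  obtain ⟨b0, hb0⟩ := hs c
  rw [Matrix.mulVecLin_apply] at hb0
  have step1 : (Finset.univ.filter (fun b : Fin n → ZMod 2 => Q.mulVec b = c)).card =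
      (Finset.univ.filter (fun b : Fin n → ZMod 2 => Q.mulVec b = 0)).card := by
    apply Finset.card_nbij' (i := fun b => b - b0) (j := fun b => b + b0)
    · intro b hb
      simp only [Finset.mem_coe, Finset.mem_filter, Finset.mem_univ, true_and] at hb ⊢
      rw [Matrix.mulVec_sub, hb, hb0, sub_self]
    · intro b hb
      simp only [Finset.mem_coe, Finset.mem_filter, Finset.mem_univ, true_and] at hb ⊢
      rw [Matrix.mulVec_add, hb, hb0, zero_add]
    · intro b _; simp
    · intro b _; simp
  rw [step1]
  have step2 : (Finset.univ.filter (fun b : Fin n → ZMod 2 => Q.mulVec b = 0)).card =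
      Fintype.card (LinearMap.ker Q.mulVecLin) := by
    rw [← Fintype.card_subtype]
    exact (Fintype.card_congr (Equiv.subtypeEquivRight fun b => by
      simp [LinearMap.mem_ker, Matrix.mulVecLin_apply])).symm
  rw [step2]
  have hrange : LinearMap.range Q.mulVecLin = ⊤ := LinearMap.range_eq_top.mpr hs
  have hkerrank : Module.finrank (ZMod 2) (LinearMap.ker Q.mulVecLin) = n - d := by
    have := LinearMap.finrank_range_add_finrank_ker (Q.mulVecLin)
    rw [hrange, finrank_top] at this
    simp only [Module.finrank_pi, Fintype.card_fin] at this
    omega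
  have := Module.card_eq_pow_finrank (K := ZMod 2) (V := LinearMap.ker Q.mulVecLin)
  rw [this, hkerrank, ZMod.card]

/-- For the box spline refinement filter `a_P = P a^H`, the condition
`Pᵀω ∉ 2ℤ^n` for all `ω ∈ {0,1}^d \ {0}` is equivalent to `a_P` having sum rules of
order at least one: `Σ_{k ∈ ℤ^d} a_P(γ + 2k) = 2^{-d}` for all `γ ∈ {0,1}^d`. -/
theorem boxspline_filter_sum_rules_iff (d n : ℕ) (hdn : d ≤ n)
    (P : Matrix (Fin d) (Fin n) ℤ) (hrank : P.rank = d) :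
    (∀ ω : Fin d → ℤ, (∀ i, ω i = 0 ∨ ω i = 1) → ω ≠ 0 →
      ¬ ∀ j, (2 : ℤ) ∣ P.transpose.mulVec ω j) ↔
    (∀ γ : Fin d → ℤ, (∀ i, γ i = 0 ∨ γ i = 1) →
      (∑ᶠ k : Fin d → ℤ, projFilter P (haarFilter n) (fun i => γ i + 2 * k i)) =
        ((2 : ℂ) ^ d)⁻¹) := by
  classical
  set Q : Matrix (Fin d) (Fin n) (ZMod 2) := P.map (Int.cast : ℤ → ZMod 2) with hQ
  constructor
  · intro hi γ hγ
    -- dual injectivity over ZMod 2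
    have hdual : ∀ w : Fin d → ZMod 2, Qᵀ.mulVec w = 0 → w = 0 := by
      intro w hw
      by_contra hwne
      have hωne : emb w ≠ 0 := by
        intro h0
        apply hwne
        funext i
        have h1 : ((w i).val : ℤ) = 0 := congrFun h0 i
        have : (w i).val = 0 := by exact_mod_cast h1
        exact (ZMod.val_eq_zero (w i)).mp this
      refine hi (emb w) (emb_mem w) hωne fun j => ?_
      have := cast_mulVec Pᵀ (emb w) j
      rw [show (fun i => ((emb w i : ℤ) : ZMod 2)) = w from funext (emb_cast w)] at this
      rw [show (Pᵀ.map (Int.cast : ℤ → ZMod 2)) = Qᵀ from (Matrix.transpose_map)] at this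
      rw [congrFun hw j] at this
      exact_mod_cast (ZMod.intCast_zmod_eq_zero_iff_dvd _ 2).mp this
    have hsurj := surj_of_dual_inj Q hdual
    rw [Tsum]
    rw [fiber_card Q hsurj _]
    have hpow : (2 : ℂ) ^ n = 2 ^ (n - d) * 2 ^ d := by
      rw [← pow_add]
      congr 1
      omega
    rw [hpow]
    push_cast
    rw [mul_inv]
    rw [← mul_assoc, mul_inv_cancel₀ (by norm_num : ((2:ℂ)^(n-d)) ≠ 0), one_mul]
  · intro hs ω hω hωne
    intro hdvd
    set w : Fin d → ZMod 2 := fun i => ((ω i : ZMod 2)) with hw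
    have hwne : w ≠ 0 := by
      intro h0
      apply hωne
      funext i
      rcases hω i with h | h
      · simp [h]
      · exfalso
        have h2 := congrFun h0 i
        rw [hw] at h2
        simp only [h] at h2
        norm_num at h2
    have hQw : Qᵀ.mulVec w = 0 := by
      funext j
      have := cast_mulVec Pᵀ ω j
      rw [show (Pᵀ.map (Int.cast : ℤ → ZMod 2)) = Qᵀ from (Matrix.transpose_map)] at this
      rw [show ((P.transpose.mulVec ω j : ℤ) : ZMod 2) = 0 from
        (ZMod.intCast_zmod_eq_zero_iff_dvd _ 2).mpr (by exact_mod_cast hdvd j)] at this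
      simp only [Pi.zero_apply]
      exact this.symm
    obtain ⟨j0, hj0⟩ : ∃ j0, w j0 ≠ 0 := by
      by_contra h
      push_neg at h
      exact hwne (funext fun i => h i)
    set γ : Fin d → ℤ := fun i => if i = j0 then 1 else 0 with hγdef
    have hγ : ∀ i, γ i = 0 ∨ γ i = 1 := by
      intro i
      by_cases h : i = j0 <;> simp [hγdef, h]
    have h1 := hs γ hγ
    rw [Tsum] at h1
    have hempty : (Finset.univ.filter (fun b : Fin n → ZMod 2 =>
        Q.mulVec b = fun i => ((γ i : ZMod 2)))).card = 0 := by
      rw [Finset.card_eq_zero, Finset.filter_eq_empty_iff]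
      intro b _
      intro hb
      have e1 : w ⬝ᵥ Q.mulVec b = 0 := by
        rw [Matrix.dotProduct_mulVec, ← Matrix.mulVec_transpose, hQw]
        simp
      have e2 : w ⬝ᵥ (fun i => ((γ i : ZMod 2))) = w j0 := by
        simp only [dotProduct, hγdef]
        rw [Finset.sum_congr rfl (fun i _ => show
            w i * (((if i = j0 then (1:ℤ) else 0) : ℤ) : ZMod 2) =
              if i = j0 then w i else 0 by
          by_cases h : i = j0 <;> simp [h])]
        simp
      rw [hb, e2] at e1
      exact hj0 e1
    rw [hempty] at h1
    simp only [Nat.cast_zero, zero_mul] at h1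
    exact (inv_ne_zero (by norm_num : (2:ℂ)^d ≠ 0)) h1.symm
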